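/- For every constant K > 0 there exist constants L > 1 and z₀ > 0 such that: whenever 0 < q, a > 0, and L·a ≤ b ≤ z₀/q, one has (2/q)·∫_{aq}^{bq} g(z) dz ≤ (b−a)·(g(aq) + g(bq)) − K·b, where g(z) = −log(β(1−e^{−z})) and β(u) = (u+√(u(4−3u)))/2. -/

import Mathlib

noncomputable def betaFn (u : ℝ) : ℝ := (u + Real.sqrt (u * (4 - 3 * u))) / 2

noncomputable def gFn (z : ℝ) : ℝ := - Real.log (betaFn (1 - Real.exp (-z)))

open Real intervalIntegral

lemma betaFn_lower {u : ℝ} (h0 : 0 ≤ u) (h1 : u ≤ 1) : Real.sqrt u / 2 ≤ betaFn u := by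
  have h : Real.sqrt u ≤ Real.sqrt (u * (4 - 3 * u)) := Real.sqrt_le_sqrt (by nlinarith)
  unfold betaFn
  linarith

lemma betaFn_upper {u : ℝ} (h0 : 0 ≤ u) (h1 : u ≤ 1) : betaFn u ≤ 3 / 2 * Real.sqrt u := by
  have h4 : Real.sqrt 4 = 2 := by
    rw [show (4:ℝ) = 2 ^ 2 by norm_num, Real.sqrt_sq (by norm_num)]
  have h : Real.sqrt (u * (4 - 3 * u)) ≤ 2 * Real.sqrt u := by
    calc Real.sqrt (u * (4 - 3 * u)) ≤ Real.sqrt (4 * u) := Real.sqrt_le_sqrt (by nlinarith)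
    _ = 2 * Real.sqrt u := by rw [Real.sqrt_mul (by norm_num), h4]
  have hu : u ≤ Real.sqrt u := by
    nth_rewrite 1 [← Real.sqrt_sq h0]
    exact Real.sqrt_le_sqrt (by nlinarith)
  unfold betaFn
  linarith

lemma u_mem {z : ℝ} (h0 : 0 < z) : 0 < 1 - Real.exp (-z) ∧ 1 - Real.exp (-z) ≤ 1 := by
  constructor
  · have : Real.exp (-z) < 1 := Real.exp_lt_one_iff.mpr (by linarith)
    linarith
  · have : 0 < Real.exp (-z) := Real.exp_pos _
    linarith

lemma gFn_lower {z : ℝ} (h0 : 0 < z) : -(1/2) * Real.log z - 2 ≤ gFn z := by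
  obtain ⟨hu0, hu1⟩ := u_mem h0
  set u := 1 - Real.exp (-z) with hu
  have huz : u ≤ z := by
    have := Real.add_one_le_exp (-z)
    simp only [hu]; linarith
  have hβpos : 0 < betaFn u := lt_of_lt_of_le (by positivity) (betaFn_lower hu0.le hu1)
  have hβ : betaFn u ≤ 3 / 2 * Real.sqrt z := by
    calc betaFn u ≤ 3 / 2 * Real.sqrt u := betaFn_upper hu0.le hu1
    _ ≤ 3 / 2 * Real.sqrt z := by
        have := Real.sqrt_le_sqrt huz
        linarith
  have hlog : Real.log (betaFn u) ≤ Real.log (3 / 2 * Real.sqrt z) :=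
    Real.log_le_log hβpos hβ
  have hval : Real.log (3 / 2 * Real.sqrt z) = Real.log (3/2) + Real.log z / 2 := by
    rw [Real.log_mul (by norm_num) (by positivity), Real.log_sqrt h0.le]
  have h32 : Real.log (3/2) ≤ 2 := by
    have : Real.log (3/2) ≤ Real.log 2 := Real.log_le_log (by norm_num) (by norm_num)
    linarith [Real.log_two_lt_d9]
  unfold gFn
  rw [← hu]
  linarith [hlog, hval ▸ hlog]

lemma gFn_upper {z : ℝ} (h0 : 0 < z) (h1 : z ≤ 1) : gFn z ≤ -(1/2) * Real.log z + 2 := by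
  obtain ⟨hu0, hu1⟩ := u_mem h0
  set u := 1 - Real.exp (-z) with hu
  have huz : z / 2 ≤ u := by
    have hz1 : (0:ℝ) < z + 1 := by linarith
    have he : z + 1 ≤ Real.exp z := Real.add_one_le_exp z
    have hinv : Real.exp (-z) ≤ (z + 1)⁻¹ := by
      rw [Real.exp_neg]
      exact inv_anti₀ hz1 he
    have h2 : (z + 1)⁻¹ ≤ 1 - z / 2 := by
      rw [inv_le_iff_one_le_mul₀ hz1]
      nlinarith
    simp only [hu]; linarith
  have hz2 : (0:ℝ) < z / 2 := by linarith
  have hlo : Real.sqrt (z / 2) / 2 ≤ betaFn u := by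
    calc Real.sqrt (z / 2) / 2 ≤ Real.sqrt u / 2 := by
          have := Real.sqrt_le_sqrt huz
          linarith
    _ ≤ betaFn u := betaFn_lower hu0.le hu1
  have hpos : (0:ℝ) < Real.sqrt (z / 2) / 2 := by positivity
  have hlog : Real.log (Real.sqrt (z / 2) / 2) ≤ Real.log (betaFn u) :=
    Real.log_le_log hpos hlo
  have hval : Real.log (Real.sqrt (z / 2) / 2)
      = (Real.log z - Real.log 2) / 2 - Real.log 2 := by
    rw [Real.log_div (by positivity) (by norm_num), Real.log_sqrt hz2.le,
      Real.log_div (ne_of_gt h0) (by norm_num)]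
  have h2 : Real.log 2 ≤ 1 := by linarith [Real.log_two_lt_d9]
  have h2' : 0 < Real.log 2 := Real.log_pos (by norm_num)
  unfold gFn
  rw [← hu]
  rw [hval] at hlog
  linarith

lemma gFn_contOn {A B : ℝ} (hA : 0 < A) : ContinuousOn gFn (Set.Icc A B) := by
  have hc : Continuous fun z : ℝ => betaFn (1 - Real.exp (-z)) := by
    unfold betaFn
    fun_prop
  unfold gFn
  apply ContinuousOn.neg
  apply ContinuousOn.log hc.continuousOn
  intro x hx
  obtain ⟨hu0, hu1⟩ := u_mem (lt_of_lt_of_le hA hx.1)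
  exact ne_of_gt (lt_of_lt_of_le (by positivity) (betaFn_lower hu0.le hu1))

theorem leaving_the_diagonal :
    ∀ K > (0:ℝ), ∃ L > (1:ℝ), ∃ z₀ > (0:ℝ), ∀ q a b : ℝ,
      0 < q → 0 < a → L * a ≤ b → b ≤ z₀ / q →
      (2 / q) * (∫ z in (a * q)..(b * q), gFn z) ≤
        (b - a) * (gFn (a * q) + gFn (b * q)) - K * b := by
  intro K hK
  refine ⟨Real.exp (2 * K + 18), Real.one_lt_exp_iff.mpr (by linarith), 1, one_pos, ?_⟩
  intro q a b hq ha hab hb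
  have hL1 : (1:ℝ) < Real.exp (2 * K + 18) := Real.one_lt_exp_iff.mpr (by linarith)
  have hba : a < b := lt_of_lt_of_le (by nlinarith) hab
  have hb0 : 0 < b := lt_trans ha hba
  have hA : 0 < a * q := mul_pos ha hq
  have hB : 0 < b * q := mul_pos hb0 hq
  have hAB : a * q ≤ b * q := by nlinarith
  have hB1 : b * q ≤ 1 := by
    rw [le_div_iff₀ hq] at hb; linarith
  have hnot : (0:ℝ) ∉ Set.uIcc (a*q) (b*q) := by
    rw [Set.uIcc_of_le hAB]
    intro h
    exact absurd h.1 (not_le.mpr hA)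
  -- integrability
  have hig : IntervalIntegrable gFn MeasureTheory.volume (a*q) (b*q) := by
    apply ContinuousOn.intervalIntegrable
    rw [Set.uIcc_of_le hAB]
    exact gFn_contOn hA
  have hil : IntervalIntegrable Real.log MeasureTheory.volume (a*q) (b*q) :=
    intervalIntegrable_log hnot
  have hif : IntervalIntegrable (fun z => -(1/2) * Real.log z + 2)
      MeasureTheory.volume (a*q) (b*q) :=
    (hil.const_mul _).add intervalIntegrable_const
  -- integral comparison
  have hmono : ∫ z in (a*q)..(b*q), gFn z ≤
      ∫ z in (a*q)..(b*q), (-(1/2) * Real.log z + 2) := by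
    apply intervalIntegral.integral_mono_on hAB hig hif
    intro x hx
    exact gFn_upper (lt_of_lt_of_le hA hx.1) (le_trans hx.2 hB1)
  have hval : ∫ z in (a*q)..(b*q), (-(1/2) * Real.log z + 2) =
      -(1/2) * (b*q * Real.log (b*q) - a*q * Real.log (a*q) - b*q + a*q)
        + 2 * (b*q - a*q) := by
    rw [intervalIntegral.integral_add (hil.const_mul _) intervalIntegrable_const,
      intervalIntegral.integral_const_mul, integral_log,
      intervalIntegral.integral_const]
    simp [smul_eq_mul]
    ring
  have hchain : (2/q) * (∫ z in (a*q)..(b*q), gFn z) ≤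
      (2/q) * (-(1/2) * (b*q * Real.log (b*q) - a*q * Real.log (a*q) - b*q + a*q)
        + 2 * (b*q - a*q)) := by
    apply mul_le_mul_of_nonneg_left _ (by positivity)
    rw [← hval] at *
    linarith [hmono]
  have hqne : q ≠ 0 := ne_of_gt hq
  have hsimp : (2/q) * (-(1/2) * (b*q * Real.log (b*q) - a*q * Real.log (a*q) - b*q + a*q)
        + 2 * (b*q - a*q))
      = -b * Real.log (b*q) + a * Real.log (a*q) + b - a + 4 * (b - a) := by
    field_simp
    ring
  -- log bounds
  have hgA := gFn_lower hA
  have hgB := gFn_lower hB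
  have hLA : Real.log (a*q) = Real.log a + Real.log q :=
    Real.log_mul (ne_of_gt ha) hqne
  have hLB : Real.log (b*q) = Real.log b + Real.log q :=
    Real.log_mul (ne_of_gt hb0) hqne
  have hld : 2 * K + 18 ≤ Real.log b - Real.log a := by
    have h1 : Real.log (Real.exp (2*K+18) * a) ≤ Real.log b :=
      Real.log_le_log (by positivity) hab
    rw [Real.log_mul (by positivity) (ne_of_gt ha), Real.log_exp] at h1
    linarith
  have hmul : (b - a) * ((-(1/2) * Real.log (a*q) - 2) + (-(1/2) * Real.log (b*q) - 2))
      ≤ (b - a) * (gFn (a*q) + gFn (b*q)) :=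
    mul_le_mul_of_nonneg_left (add_le_add hgA hgB) (by linarith)
  have hkey : -b * Real.log (b*q) + a * Real.log (a*q) + b - a + 4 * (b - a)
      ≤ (b - a) * ((-(1/2) * Real.log (a*q) - 2) + (-(1/2) * Real.log (b*q) - 2)) - K * b := by
    rw [hLA, hLB]
    nlinarith [mul_nonneg (by linarith : (0:ℝ) ≤ a + b)
      (by linarith : (0:ℝ) ≤ Real.log b - Real.log a - (2*K+18)),
      mul_pos hK ha]
  calc (2/q) * (∫ z in (a*q)..(b*q), gFn z)
      ≤ -b * Real.log (b*q) + a * Real.log (a*q) + b - a + 4 * (b - a) := by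
        rw [← hsimp]; exact hchain
    _ ≤ (b - a) * ((-(1/2) * Real.log (a*q) - 2) + (-(1/2) * Real.log (b*q) - 2)) - K * b := hkey
    _ ≤ (b - a) * (gFn (a*q) + gFn (b*q)) - K * b := by linarith
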